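/- arXiv:2605.03584 — 3 statements merged into one kernel-verified Lean document; each statement's English description precedes it below -/
import Mathlib

section
/- Let M1, M2, N1, N2 be smooth manifolds and i1 : M1 → M2, j1 : M1 → N1, i2 : N1 → N2, j2 : M2 → N2 smooth immersions with j2 ∘ i1 = i2 ∘ j1. Then the following three conditions are equivalent: (N-j) for every m ∈ M1 and δ ∈ T_{i1(m)} M2, if (j2)_* δ lies in the range of (i2)_* then δ lies in the range of (i1)_*; (N-i) for every m ∈ M1 and γ ∈ T_{j1(m)} N1, if (i2)_* γ lies in the range of (j2)_* then γ lies in the range of (j1)_*; (E) for every m ∈ M1, δ ∈ T_{i1(m)} M2 and γ ∈ T_{j1(m)} N1 with (j2)_* δ = (i2)_* γ, there exists a unique ε ∈ T_m M1 with (i1)_* ε = δ and (j1)_* ε = γ. -/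
open Manifold Set

/-- Proposition `prop-2immer` of the paper: for a commutative square of smooth
immersions `j₂ ∘ i₁ = i₂ ∘ j₁`, the fibrewise injectivity of the normal
differential `N(j₂,j₁)`, that of `N(i₂,i₁)`, and the exactness of
`TM₁ → TN₁ × TM₂ → TN₂` at the middle term are equivalent. -/
theorem stmt_0
    {E₁ E₂ E₃ E₄ : Type*}
    [NormedAddCommGroup E₁] [NormedSpace ℝ E₁] [FiniteDimensional ℝ E₁]
    [NormedAddCommGroup E₂] [NormedSpace ℝ E₂] [FiniteDimensional ℝ E₂]
    [NormedAddCommGroup E₃] [NormedSpace ℝ E₃] [FiniteDimensional ℝ E₃]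
    [NormedAddCommGroup E₄] [NormedSpace ℝ E₄] [FiniteDimensional ℝ E₄]
    {H₁ H₂ H₃ H₄ : Type*}
    [TopologicalSpace H₁] [TopologicalSpace H₂] [TopologicalSpace H₃] [TopologicalSpace H₄]
    {I₁ : ModelWithCorners ℝ E₁ H₁} {I₂ : ModelWithCorners ℝ E₂ H₂}
    {I₃ : ModelWithCorners ℝ E₃ H₃} {I₄ : ModelWithCorners ℝ E₄ H₄}
    [I₁.Boundaryless] [I₂.Boundaryless] [I₃.Boundaryless] [I₄.Boundaryless]
    {M₁ : Type*} [TopologicalSpace M₁] [ChartedSpace H₁ M₁] [IsManifold I₁ (⊤ : ℕ∞) M₁]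
    {M₂ : Type*} [TopologicalSpace M₂] [ChartedSpace H₂ M₂] [IsManifold I₂ (⊤ : ℕ∞) M₂]
    {N₁ : Type*} [TopologicalSpace N₁] [ChartedSpace H₃ N₁] [IsManifold I₃ (⊤ : ℕ∞) N₁]
    {N₂ : Type*} [TopologicalSpace N₂] [ChartedSpace H₄ N₂] [IsManifold I₄ (⊤ : ℕ∞) N₂]
    (i₁ : M₁ → M₂) (j₁ : M₁ → N₁) (i₂ : N₁ → N₂) (j₂ : M₂ → N₂)
    (hi₁ : ContMDiff I₁ I₂ (⊤ : ℕ∞) i₁) (hj₁ : ContMDiff I₁ I₃ (⊤ : ℕ∞) j₁)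
    (hi₂ : ContMDiff I₃ I₄ (⊤ : ℕ∞) i₂) (hj₂ : ContMDiff I₂ I₄ (⊤ : ℕ∞) j₂)
    (hi₁imm : ∀ m, Function.Injective (mfderiv I₁ I₂ i₁ m))
    (hj₁imm : ∀ m, Function.Injective (mfderiv I₁ I₃ j₁ m))
    (hi₂imm : ∀ n, Function.Injective (mfderiv I₃ I₄ i₂ n))
    (hj₂imm : ∀ n, Function.Injective (mfderiv I₂ I₄ j₂ n))
    (hcomm : ∀ m, j₂ (i₁ m) = i₂ (j₁ m)) :
    List.TFAE
      [ ∀ (m : M₁) (δ : TangentSpace I₂ (i₁ m)),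
          mfderiv I₂ I₄ j₂ (i₁ m) δ ∈ Set.range (mfderiv I₃ I₄ i₂ (j₁ m)) →
          δ ∈ Set.range (mfderiv I₁ I₂ i₁ m),
        ∀ (m : M₁) (γ : TangentSpace I₃ (j₁ m)),
          mfderiv I₃ I₄ i₂ (j₁ m) γ ∈ Set.range (mfderiv I₂ I₄ j₂ (i₁ m)) →
          γ ∈ Set.range (mfderiv I₁ I₃ j₁ m),
        ∀ (m : M₁) (δ : TangentSpace I₂ (i₁ m)) (γ : TangentSpace I₃ (j₁ m)),
          mfderiv I₂ I₄ j₂ (i₁ m) δ = mfderiv I₃ I₄ i₂ (j₁ m) γ →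
          ∃! ε : TangentSpace I₁ m,
            mfderiv I₁ I₂ i₁ m ε = δ ∧ mfderiv I₁ I₃ j₁ m ε = γ ] := by
  have hkey : ∀ (m : M₁) (ε : TangentSpace I₁ m),
      mfderiv I₂ I₄ j₂ (i₁ m) (mfderiv I₁ I₂ i₁ m ε) =
      mfderiv I₃ I₄ i₂ (j₁ m) (mfderiv I₁ I₃ j₁ m ε) := by
    intro m ε
    have h1 := mfderiv_comp m (hj₂.mdifferentiableAt (by simp)) (hi₁.mdifferentiableAt (by simp))
    have h2 := mfderiv_comp m (hi₂.mdifferentiableAt (by simp)) (hj₁.mdifferentiableAt (by simp))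
    have hfun : j₂ ∘ i₁ = i₂ ∘ j₁ := funext hcomm
    rw [hfun] at h1
    have := h1.symm.trans h2
    exact DFunLike.congr_fun this ε
  tfae_have 1 → 3 := by
    intro h m δ γ heq
    obtain ⟨ε, hε⟩ := h m δ ⟨γ, heq.symm⟩
    refine ⟨ε, ⟨hε, ?_⟩, ?_⟩
    · apply hi₂imm (j₁ m)
      have := hkey m ε
      rw [hε] at this
      exact this.symm.trans heq
    · rintro ε' ⟨hε', -⟩
      exact hi₁imm m (hε'.trans hε.symm)
  tfae_have 3 → 2 := by
    intro h m γ hγ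
    obtain ⟨δ, hδ⟩ := hγ
    obtain ⟨ε, ⟨-, hε2⟩, -⟩ := h m δ γ hδ
    exact ⟨ε, hε2⟩
  tfae_have 2 → 1 := by
    intro h m δ hδ
    obtain ⟨γ, hγ⟩ := hδ
    obtain ⟨ε, hε⟩ := h m γ ⟨δ, hγ.symm⟩
    refine ⟨ε, hj₂imm (i₁ m) ?_⟩
    have := hkey m ε
    rw [hε, hγ] at this
    exact this
  tfae_finish
end

section
/- Let M1, M2, N1, N2 be smooth manifolds and i1 : M1 → M2, j1 : M1 → N1, i2 : N1 → N2, j2 : M2 → N2 smooth immersions with j2 ∘ i1 = i2 ∘ j1. Assume condition (N-j): for every m ∈ M1 and δ ∈ T_{i1(m)} M2, if (j2)_* δ lies in the range of (i2)_*, then δ lies in the range of (i1)_*. Then condition (E) holds: for every m ∈ M1, δ ∈ T_{i1(m)} M2 and γ ∈ T_{j1(m)} N1 with (j2)_* δ = (i2)_* γ, there exists a unique ε ∈ T_m M1 with (i1)_* ε = δ and (j1)_* ε = γ. -/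
open Manifold Set

/-- Implication (1) ⇒ (3) in Proposition `prop-2immer`: fibrewise injectivity of
the normal differential `N(j₂,j₁)` implies exactness of the tangent sequence. -/
theorem stmt_2
    {E₁ E₂ E₃ E₄ : Type*}
    [NormedAddCommGroup E₁] [NormedSpace ℝ E₁] [FiniteDimensional ℝ E₁]
    [NormedAddCommGroup E₂] [NormedSpace ℝ E₂] [FiniteDimensional ℝ E₂]
    [NormedAddCommGroup E₃] [NormedSpace ℝ E₃] [FiniteDimensional ℝ E₃]
    [NormedAddCommGroup E₄] [NormedSpace ℝ E₄] [FiniteDimensional ℝ E₄]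
    {H₁ H₂ H₃ H₄ : Type*}
    [TopologicalSpace H₁] [TopologicalSpace H₂] [TopologicalSpace H₃] [TopologicalSpace H₄]
    {I₁ : ModelWithCorners ℝ E₁ H₁} {I₂ : ModelWithCorners ℝ E₂ H₂}
    {I₃ : ModelWithCorners ℝ E₃ H₃} {I₄ : ModelWithCorners ℝ E₄ H₄}
    [I₁.Boundaryless] [I₂.Boundaryless] [I₃.Boundaryless] [I₄.Boundaryless]
    {M₁ : Type*} [TopologicalSpace M₁] [ChartedSpace H₁ M₁] [IsManifold I₁ (⊤ : ℕ∞) M₁]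
    {M₂ : Type*} [TopologicalSpace M₂] [ChartedSpace H₂ M₂] [IsManifold I₂ (⊤ : ℕ∞) M₂]
    {N₁ : Type*} [TopologicalSpace N₁] [ChartedSpace H₃ N₁] [IsManifold I₃ (⊤ : ℕ∞) N₁]
    {N₂ : Type*} [TopologicalSpace N₂] [ChartedSpace H₄ N₂] [IsManifold I₄ (⊤ : ℕ∞) N₂]
    (i₁ : M₁ → M₂) (j₁ : M₁ → N₁) (i₂ : N₁ → N₂) (j₂ : M₂ → N₂)
    (hi₁ : ContMDiff I₁ I₂ (⊤ : ℕ∞) i₁) (hj₁ : ContMDiff I₁ I₃ (⊤ : ℕ∞) j₁)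
    (hi₂ : ContMDiff I₃ I₄ (⊤ : ℕ∞) i₂) (hj₂ : ContMDiff I₂ I₄ (⊤ : ℕ∞) j₂)
    (hi₁imm : ∀ m, Function.Injective (mfderiv I₁ I₂ i₁ m))
    (hj₁imm : ∀ m, Function.Injective (mfderiv I₁ I₃ j₁ m))
    (hi₂imm : ∀ n, Function.Injective (mfderiv I₃ I₄ i₂ n))
    (hj₂imm : ∀ n, Function.Injective (mfderiv I₂ I₄ j₂ n))
    (hcomm : ∀ m, j₂ (i₁ m) = i₂ (j₁ m))
    (hNj : ∀ (m : M₁) (δ : TangentSpace I₂ (i₁ m)),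
        mfderiv I₂ I₄ j₂ (i₁ m) δ ∈ Set.range (mfderiv I₃ I₄ i₂ (j₁ m)) →
        δ ∈ Set.range (mfderiv I₁ I₂ i₁ m)) :
    ∀ (m : M₁) (δ : TangentSpace I₂ (i₁ m)) (γ : TangentSpace I₃ (j₁ m)),
      mfderiv I₂ I₄ j₂ (i₁ m) δ = mfderiv I₃ I₄ i₂ (j₁ m) γ →
      ∃! ε : TangentSpace I₁ m,
        mfderiv I₁ I₂ i₁ m ε = δ ∧ mfderiv I₁ I₃ j₁ m ε = γ := by
  intro m δ γ h
  have hfun : j₂ ∘ i₁ = i₂ ∘ j₁ := funext hcomm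
  have hchain : ∀ ε : TangentSpace I₁ m,
      mfderiv I₂ I₄ j₂ (i₁ m) (mfderiv I₁ I₂ i₁ m ε)
        = mfderiv I₃ I₄ i₂ (j₁ m) (mfderiv I₁ I₃ j₁ m ε) := by
    intro ε
    have h1 : mfderiv I₁ I₄ (j₂ ∘ i₁) m
        = (mfderiv I₂ I₄ j₂ (i₁ m)).comp (mfderiv I₁ I₂ i₁ m) :=
      mfderiv_comp m (hj₂.mdifferentiableAt (by simp)) (hi₁.mdifferentiableAt (by simp))
    have h2 : mfderiv I₁ I₄ (i₂ ∘ j₁) m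
        = (mfderiv I₃ I₄ i₂ (j₁ m)).comp (mfderiv I₁ I₃ j₁ m) :=
      mfderiv_comp m (hi₂.mdifferentiableAt (by simp)) (hj₁.mdifferentiableAt (by simp))
    have := h1.symm.trans (hfun ▸ h2)
    exact DFunLike.congr_fun this ε
  obtain ⟨ε, hε⟩ := hNj m δ ⟨γ, h.symm⟩
  have hγ : mfderiv I₁ I₃ j₁ m ε = γ := by
    apply hi₂imm (j₁ m)
    rw [← hchain ε, hε, h]
  refine ⟨ε, ⟨hε, hγ⟩, ?_⟩
  intro ε' ⟨h1, _⟩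
  exact hi₁imm m (h1.trans hε.symm)
end

section
/- Let M1, M2, N1, N2 be smooth manifolds and i1 : M1 → M2, j1 : M1 → N1, i2 : N1 → N2, j2 : M2 → N2 smooth immersions with j2 ∘ i1 = i2 ∘ j1. Then condition (N-j) holds if and only if condition (N-i) holds, where (N-j): for every m ∈ M1 and δ ∈ T_{i1(m)} M2, if (j2)_* δ lies in the range of (i2)_* then δ lies in the range of (i1)_*; and (N-i): for every m ∈ M1 and γ ∈ T_{j1(m)} N1, if (i2)_* γ lies in the range of (j2)_* then γ lies in the range of (j1)_*. -/
open Manifold Set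

/-- Equivalence (1) ⇔ (2) of Proposition `prop-2immer`: the normal differential
`N(j₂,j₁)` is fibrewise injective iff `N(i₂,i₁)` is. -/
theorem stmt_3
    {E₁ E₂ E₃ E₄ : Type*}
    [NormedAddCommGroup E₁] [NormedSpace ℝ E₁] [FiniteDimensional ℝ E₁]
    [NormedAddCommGroup E₂] [NormedSpace ℝ E₂] [FiniteDimensional ℝ E₂]
    [NormedAddCommGroup E₃] [NormedSpace ℝ E₃] [FiniteDimensional ℝ E₃]
    [NormedAddCommGroup E₄] [NormedSpace ℝ E₄] [FiniteDimensional ℝ E₄]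
    {H₁ H₂ H₃ H₄ : Type*}
    [TopologicalSpace H₁] [TopologicalSpace H₂] [TopologicalSpace H₃] [TopologicalSpace H₄]
    {I₁ : ModelWithCorners ℝ E₁ H₁} {I₂ : ModelWithCorners ℝ E₂ H₂}
    {I₃ : ModelWithCorners ℝ E₃ H₃} {I₄ : ModelWithCorners ℝ E₄ H₄}
    [I₁.Boundaryless] [I₂.Boundaryless] [I₃.Boundaryless] [I₄.Boundaryless]
    {M₁ : Type*} [TopologicalSpace M₁] [ChartedSpace H₁ M₁] [IsManifold I₁ (⊤ : ℕ∞) M₁]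
    {M₂ : Type*} [TopologicalSpace M₂] [ChartedSpace H₂ M₂] [IsManifold I₂ (⊤ : ℕ∞) M₂]
    {N₁ : Type*} [TopologicalSpace N₁] [ChartedSpace H₃ N₁] [IsManifold I₃ (⊤ : ℕ∞) N₁]
    {N₂ : Type*} [TopologicalSpace N₂] [ChartedSpace H₄ N₂] [IsManifold I₄ (⊤ : ℕ∞) N₂]
    (i₁ : M₁ → M₂) (j₁ : M₁ → N₁) (i₂ : N₁ → N₂) (j₂ : M₂ → N₂)
    (hi₁ : ContMDiff I₁ I₂ (⊤ : ℕ∞) i₁) (hj₁ : ContMDiff I₁ I₃ (⊤ : ℕ∞) j₁)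
    (hi₂ : ContMDiff I₃ I₄ (⊤ : ℕ∞) i₂) (hj₂ : ContMDiff I₂ I₄ (⊤ : ℕ∞) j₂)
    (hi₁imm : ∀ m, Function.Injective (mfderiv I₁ I₂ i₁ m))
    (hj₁imm : ∀ m, Function.Injective (mfderiv I₁ I₃ j₁ m))
    (hi₂imm : ∀ n, Function.Injective (mfderiv I₃ I₄ i₂ n))
    (hj₂imm : ∀ n, Function.Injective (mfderiv I₂ I₄ j₂ n))
    (hcomm : ∀ m, j₂ (i₁ m) = i₂ (j₁ m))
    :
    (∀ (m : M₁) (δ : TangentSpace I₂ (i₁ m)),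
        mfderiv I₂ I₄ j₂ (i₁ m) δ ∈ Set.range (mfderiv I₃ I₄ i₂ (j₁ m)) →
        δ ∈ Set.range (mfderiv I₁ I₂ i₁ m)) ↔
    (∀ (m : M₁) (γ : TangentSpace I₃ (j₁ m)),
        mfderiv I₃ I₄ i₂ (j₁ m) γ ∈ Set.range (mfderiv I₂ I₄ j₂ (i₁ m)) →
        γ ∈ Set.range (mfderiv I₁ I₃ j₁ m)) := by
  have hfun : j₂ ∘ i₁ = i₂ ∘ j₁ := funext hcomm
  have key : ∀ (m : M₁) (v : TangentSpace I₁ m),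
      mfderiv I₂ I₄ j₂ (i₁ m) (mfderiv I₁ I₂ i₁ m v)
        = mfderiv I₃ I₄ i₂ (j₁ m) (mfderiv I₁ I₃ j₁ m v) := by
    intro m v
    have h1 : mfderiv I₁ I₄ (j₂ ∘ i₁) m
        = (mfderiv I₂ I₄ j₂ (i₁ m)).comp (mfderiv I₁ I₂ i₁ m) :=
      mfderiv_comp m (hj₂.mdifferentiableAt (by simp)) (hi₁.mdifferentiableAt (by simp))
    have h2 : mfderiv I₁ I₄ (i₂ ∘ j₁) m
        = (mfderiv I₃ I₄ i₂ (j₁ m)).comp (mfderiv I₁ I₃ j₁ m) :=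
      mfderiv_comp m (hi₂.mdifferentiableAt (by simp)) (hj₁.mdifferentiableAt (by simp))
    rw [hfun] at h1
    have := h1.symm.trans h2
    exact congrFun (congrArg DFunLike.coe this) v
  constructor
  · intro hNj m γ hγ
    obtain ⟨δ, hδ⟩ := hγ
    obtain ⟨α, hα⟩ := hNj m δ ⟨γ, hδ.symm⟩
    refine ⟨α, hi₂imm (j₁ m) ?_⟩
    rw [← key m α, hα, hδ]
  · intro hNi m δ hδ
    obtain ⟨γ, hγ⟩ := hδ
    obtain ⟨α, hα⟩ := hNi m γ ⟨δ, hγ.symm⟩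
    refine ⟨α, hj₂imm (i₁ m) ?_⟩
    rw [key m α, hα, hγ]
end
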